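/- Let x ∈ ℝ^m have support N := {i : x_i ≠ 0}, let T ⊆ {1,…,m} and set Δ := N \ T and Δ_e := T \ N. Let y = A x + w ∈ ℝ^n with ‖w‖₂ ≤ ε. If some δ < (√2 − 1)/2 is an (|N| + |Δ| + |Δ_e|)-restricted isometry bound for A, then every modified-CS estimate x̂ with known part T computed from y satisfies ‖x − x̂‖₂ ≤ C₁(δ)·ε ≤ 8.79·ε. -/

import Mathlib

open Finset

attribute [local instance] Classical.propDecidable

/-- Euclidean (ℓ2) norm of a finite real vector. -/
noncomputable def norm2 {k : ℕ} (v : Fin k → ℝ) : ℝ := Real.sqrt (∑ i, v i ^ 2)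

/-- ℓ∞ norm (maximum absolute entry) of a finite real vector. -/
noncomputable def normInf {k : ℕ} (v : Fin k → ℝ) : ℝ := ⨆ i, |v i|

/-- Support of a vector, as a finset. -/
noncomputable def spt {k : ℕ} (v : Fin k → ℝ) : Finset (Fin k) :=
  Finset.univ.filter (fun i => v i ≠ 0)

/-- Restriction of a vector to the coordinates indexed by `T` (zero elsewhere). -/
noncomputable def restr {k : ℕ} (T : Finset (Fin k)) (v : Fin k → ℝ) : Fin k → ℝ :=
  fun i => if i ∈ T then v i else 0

/-- `δ ∈ [0,1)` is an `S`-restricted isometry bound for `A`: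
`(1-δ)‖z‖² ≤ ‖Az‖² ≤ (1+δ)‖z‖²` for every `z` with at most `S` nonzero entries. -/
def RIPBound {n m : ℕ} (A : Matrix (Fin n) (Fin m) ℝ) (S : ℕ) (δ : ℝ) : Prop :=
  0 ≤ δ ∧ δ < 1 ∧
    ∀ z : Fin m → ℝ, (spt z).card ≤ S →
      (1 - δ) * (∑ i, z i ^ 2) ≤ (∑ j, (A.mulVec z) j ^ 2) ∧
      (∑ j, (A.mulVec z) j ^ 2) ≤ (1 + δ) * (∑ i, z i ^ 2)

/-- `θ ≥ 0` is an `(S,S')`-restricted orthogonality bound for `A`: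
`|⟨Az, Az'⟩| ≤ θ‖z‖‖z'‖` for all `z, z'` with disjoint supports of cardinalities `≤ S, S'`. -/
def ROBound {n m : ℕ} (A : Matrix (Fin n) (Fin m) ℝ) (S S' : ℕ) (θ : ℝ) : Prop :=
  0 ≤ θ ∧
    ∀ z z' : Fin m → ℝ, Disjoint (spt z) (spt z') →
      (spt z).card ≤ S → (spt z').card ≤ S' →
      |∑ j, (A.mulVec z) j * (A.mulVec z') j| ≤ θ * norm2 z * norm2 z'

/-- A modified-CS estimate with known part `T`: feasible and with minimal ℓ1 norm outside `T`
among all feasible vectors. -/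
def ModCS {n m : ℕ} (A : Matrix (Fin n) (Fin m) ℝ) (y : Fin n → ℝ) (ε : ℝ)
    (T : Finset (Fin m)) (xhat : Fin m → ℝ) : Prop :=
  norm2 (fun j => y j - (A.mulVec xhat) j) ≤ ε ∧
    ∀ β : Fin m → ℝ, norm2 (fun j => y j - (A.mulVec β) j) ≤ ε →
      ∑ i ∈ Tᶜ, |xhat i| ≤ ∑ i ∈ Tᶜ, |β i|

/-- The LS estimate on `T` from `y`: supported on `T` and satisfying the normal equations
`A_Tᵀ (y - A x̂) = 0` (equivalently `x̂_T = (A_Tᵀ A_T)⁻¹ A_Tᵀ y` when `A_T` has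
full column rank). -/
def IsLS {n m : ℕ} (A : Matrix (Fin n) (Fin m) ℝ) (y : Fin n → ℝ)
    (T : Finset (Fin m)) (xhat : Fin m → ℝ) : Prop :=
  (∀ i, i ∉ T → xhat i = 0) ∧
    ∀ i ∈ T, (∑ j, A j i * (y j - (A.mulVec xhat) j)) = 0

/-- `C₁(δ) = 4√(1+δ)/(1-(√2+1)δ)`. -/
noncomputable def C1 (δ : ℝ) : ℝ := 4 * Real.sqrt (1 + δ) / (1 - (Real.sqrt 2 + 1) * δ)

/-- `C₂(δ) = 2(1+(√2-1)δ)/(1-(√2+1)δ)`. -/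
noncomputable def C2 (δ : ℝ) : ℝ := 2 * (1 + (Real.sqrt 2 - 1) * δ) / (1 - (Real.sqrt 2 + 1) * δ)

variable {k : ℕ}

lemma norm2_nonneg (v : Fin k → ℝ) : 0 ≤ norm2 v := Real.sqrt_nonneg _

lemma sq_norm2 (v : Fin k → ℝ) : norm2 v ^ 2 = ∑ i, v i ^ 2 :=
  Real.sq_sqrt (by positivity)

lemma norm2_le {v : Fin k → ℝ} {c : ℝ} (hc : 0 ≤ c) (h : ∑ i, v i ^ 2 ≤ c ^ 2) :
    norm2 v ≤ c := by
  rw [norm2, show c = Real.sqrt (c ^ 2) by rw [Real.sqrt_sq hc]]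
  exact Real.sqrt_le_sqrt h

lemma norm2_eq_zero {v : Fin k → ℝ} (h : norm2 v = 0) : ∀ i, v i = 0 := by
  intro i
  have h2 : ∑ i, v i ^ 2 = 0 := by
    have := sq_norm2 v; rw [h] at this; linarith [this]
  have := (Finset.sum_eq_zero_iff_of_nonneg (by intro j _; positivity)).mp h2 i (mem_univ i)
  exact pow_eq_zero_iff two_ne_zero |>.mp this

lemma cauchy_s (s : Finset (Fin k)) (u v : Fin k → ℝ) :
    |∑ i ∈ s, u i * v i| ≤ Real.sqrt (∑ i ∈ s, u i ^ 2) * Real.sqrt (∑ i ∈ s, v i ^ 2) := by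
  rw [← Real.sqrt_mul (by positivity)]
  rw [show |∑ i ∈ s, u i * v i| = Real.sqrt ((∑ i ∈ s, u i * v i) ^ 2) by
    rw [Real.sqrt_sq_eq_abs]]
  exact Real.sqrt_le_sqrt (Finset.sum_mul_sq_le_sq_mul_sq s u v)

lemma cauchy (u v : Fin k → ℝ) : |∑ i, u i * v i| ≤ norm2 u * norm2 v := cauchy_s univ u v

lemma norm2_triangle (u v : Fin k → ℝ) :
    norm2 (fun i => u i + v i) ≤ norm2 u + norm2 v := by
  apply norm2_le (by have := norm2_nonneg u; have := norm2_nonneg v; linarith)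
  have hc := cauchy u v
  have h1 : ∑ i, u i * v i ≤ norm2 u * norm2 v := le_trans (le_abs_self _) hc
  have h2 := sq_norm2 u; have h3 := sq_norm2 v
  have : ∑ i, (u i + v i) ^ 2 = (∑ i, u i ^ 2) + 2 * (∑ i, u i * v i) + ∑ i, v i ^ 2 := by
    rw [Finset.sum_congr rfl (fun i _ => by ring : ∀ i ∈ univ, (u i + v i)^2 = u i ^2 + 2*(u i * v i) + v i ^2), Finset.sum_add_distrib, Finset.sum_add_distrib, Finset.mul_sum]
  rw [this]; nlinarith

lemma spt_restr_subset (T : Finset (Fin k)) (v : Fin k → ℝ) : spt (restr T v) ⊆ T := by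
  intro i hi
  simp only [spt, restr, mem_filter] at hi
  by_contra h; simp [h] at hi

lemma sum_sq_restr (T : Finset (Fin k)) (v : Fin k → ℝ) :
    ∑ i, restr T v i ^ 2 = ∑ i ∈ T, v i ^ 2 := by
  rw [show ∑ i, restr T v i ^ 2 = ∑ i, if i ∈ T then v i ^ 2 else 0 by
    apply Finset.sum_congr rfl; intro i _; by_cases h : i ∈ T <;> simp [restr, h]]
  simp [Finset.sum_ite_mem]

lemma norm2_restr_mono {T T' : Finset (Fin k)} (h : T ⊆ T') (v : Fin k → ℝ) :
    norm2 (restr T v) ≤ norm2 (restr T' v) := by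
  apply Real.sqrt_le_sqrt
  rw [sum_sq_restr, sum_sq_restr]
  exact Finset.sum_le_sum_of_subset_of_nonneg h (fun i _ _ => by positivity)

lemma norm2_sum_fn {ι : Type*} (r : Finset ι) (f : ι → Fin k → ℝ) :
    norm2 (fun i => ∑ j ∈ r, f j i) ≤ ∑ j ∈ r, norm2 (f j) := by
  induction r using Finset.cons_induction with
  | empty => simp [norm2]
  | cons a r ha ih =>
      rw [Finset.sum_cons]
      calc norm2 (fun i => ∑ j ∈ cons a r ha, f j i)
          = norm2 (fun i => f a i + ∑ j ∈ r, f j i) := by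
            congr 1; ext i; rw [Finset.sum_cons]
        _ ≤ norm2 (f a) + norm2 (fun i => ∑ j ∈ r, f j i) := norm2_triangle _ _
        _ ≤ norm2 (f a) + ∑ j ∈ r, norm2 (f j) := by linarith [ih]

lemma l1_le_sqrt_card_l2 (s : Finset (Fin k)) (v : Fin k → ℝ) :
    ∑ i ∈ s, |v i| ≤ Real.sqrt s.card * norm2 (restr s v) := by
  have h := sq_sum_le_card_mul_sum_sq (s := s) (f := fun i => |v i|)
  have h2 : ∑ i ∈ s, |v i| ^ 2 = ∑ i, restr s v i ^ 2 := by
    rw [sum_sq_restr]; exact Finset.sum_congr rfl (fun i _ => sq_abs _)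
  have h3 : (0:ℝ) ≤ ∑ i ∈ s, |v i| := Finset.sum_nonneg (fun i _ => abs_nonneg _)
  rw [show ∑ i ∈ s, |v i| = Real.sqrt ((∑ i ∈ s, |v i|)^2) by rw [Real.sqrt_sq h3]]
  rw [show Real.sqrt s.card * norm2 (restr s v) = Real.sqrt (s.card * ∑ i, restr s v i ^2) by
    rw [Real.sqrt_mul (by positivity)]; rfl]
  apply Real.sqrt_le_sqrt
  rw [← h2]; exact_mod_cast h

lemma norm2_neg (v : Fin k → ℝ) : norm2 (fun i => - v i) = norm2 v := by
  unfold norm2; congr 1; exact Finset.sum_congr rfl (fun i _ => by ring)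


lemma mulVec_comb {n m : ℕ} (A : Matrix (Fin n) (Fin m) ℝ) (a b : ℝ) (z z' : Fin m → ℝ) (j : Fin n) :
    A.mulVec (fun i => a * z i + b * z' i) j = a * A.mulVec z j + b * A.mulVec z' j := by
  simp only [Matrix.mulVec, dotProduct, Finset.mul_sum]
  rw [← Finset.sum_add_distrib]
  exact Finset.sum_congr rfl (fun i _ => by ring)

lemma ro_bound {n m : ℕ} {A : Matrix (Fin n) (Fin m) ℝ} {S : ℕ} {δ : ℝ}
    (hRIP : RIPBound A S δ) (z z' : Fin m → ℝ)
    (hd : Disjoint (spt z) (spt z')) (hc : (spt z).card + (spt z').card ≤ S) :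
    |∑ j, A.mulVec z j * A.mulVec z' j| ≤ δ * norm2 z * norm2 z' := by
  set a := norm2 z with ha
  set b := norm2 z' with hb
  by_cases haz : a = 0
  · have hz : ∀ i, z i = 0 := norm2_eq_zero haz
    have h0 : ∀ j, A.mulVec z j = 0 := by
      intro j; simp only [Matrix.mulVec, dotProduct]
      exact Finset.sum_eq_zero (fun i _ => by rw [hz i]; ring)
    have : ∑ j, A.mulVec z j * A.mulVec z' j = 0 :=
      Finset.sum_eq_zero (fun j _ => by rw [h0 j]; ring)
    rw [this, haz]; simp
  by_cases hbz : b = 0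
  · have hz : ∀ i, z' i = 0 := norm2_eq_zero hbz
    have h0 : ∀ j, A.mulVec z' j = 0 := by
      intro j; simp only [Matrix.mulVec, dotProduct]
      exact Finset.sum_eq_zero (fun i _ => by rw [hz i]; ring)
    have : ∑ j, A.mulVec z j * A.mulVec z' j = 0 :=
      Finset.sum_eq_zero (fun j _ => by rw [h0 j]; ring)
    rw [this, hbz]; simp
  have ha0 : 0 < a := lt_of_le_of_ne (norm2_nonneg z) (Ne.symm haz)
  have hb0 : 0 < b := lt_of_le_of_ne (norm2_nonneg z') (Ne.symm hbz)
  have ha2 : a ^ 2 = ∑ i, z i ^ 2 := sq_norm2 z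
  have hb2 : b ^ 2 = ∑ i, z' i ^ 2 := sq_norm2 z'
  -- cross terms vanish
  have hzz : ∀ i, z i * z' i = 0 := by
    intro i
    by_cases h1 : z i = 0
    · rw [h1]; ring
    by_cases h2 : z' i = 0
    · rw [h2]; ring
    exfalso
    have h3 : i ∈ spt z := by simp [spt, h1]
    have h4 : i ∈ spt z' := by simp [spt, h2]
    exact (Finset.disjoint_left.mp hd h3) h4
  set p := fun i => b * z i + a * z' i with hp
  set q := fun i => b * z i + (-a) * z' i with hq
  have hsptp : (spt p).card ≤ S := by
    refine le_trans (Finset.card_le_card ?_) (le_trans (Finset.card_union_le _ _) hc)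
    intro i hi
    simp only [spt, mem_filter, mem_univ, true_and, mem_union] at hi ⊢
    by_contra hcon
    push_neg at hcon
    simp [hp, hcon.1, hcon.2] at hi
  have hsptq : (spt q).card ≤ S := by
    refine le_trans (Finset.card_le_card ?_) (le_trans (Finset.card_union_le _ _) hc)
    intro i hi
    simp only [spt, mem_filter, mem_univ, true_and, mem_union] at hi ⊢
    by_contra hcon
    push_neg at hcon
    simp [hq, hcon.1, hcon.2] at hi
  have hsump : ∑ i, p i ^ 2 = 2 * (a^2 * b^2) := by
    have : ∀ i, p i ^ 2 = b^2 * z i ^2 + a^2 * z' i ^2 + 2*a*b*(z i * z' i) := by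
      intro i; simp only [hp]; ring
    rw [Finset.sum_congr rfl (fun i _ => this i)]
    rw [Finset.sum_add_distrib, Finset.sum_add_distrib, ← Finset.mul_sum, ← Finset.mul_sum,
      ← Finset.mul_sum]
    rw [Finset.sum_congr rfl (fun i _ => hzz i), Finset.sum_const]
    rw [← ha2, ← hb2]; simp; ring
  have hsumq : ∑ i, q i ^ 2 = 2 * (a^2 * b^2) := by
    have : ∀ i, q i ^ 2 = b^2 * z i ^2 + a^2 * z' i ^2 + (-2)*a*b*(z i * z' i) := by
      intro i; simp only [hq]; ring
    rw [Finset.sum_congr rfl (fun i _ => this i)]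
    rw [Finset.sum_add_distrib, Finset.sum_add_distrib, ← Finset.mul_sum, ← Finset.mul_sum,
      ← Finset.mul_sum]
    rw [Finset.sum_congr rfl (fun i _ => hzz i), Finset.sum_const]
    rw [← ha2, ← hb2]; simp; ring
  have hAp : ∑ j, A.mulVec p j ^ 2
      = b^2 * (∑ j, A.mulVec z j ^2) + a^2 * (∑ j, A.mulVec z' j ^2)
        + 2*a*b*(∑ j, A.mulVec z j * A.mulVec z' j) := by
    rw [Finset.sum_congr rfl (fun j _ => by
      rw [mulVec_comb A b a z z' j]; ring_nf :
        ∀ j ∈ univ, A.mulVec p j ^2 = b^2 * A.mulVec z j ^2 + a^2 * A.mulVec z' j ^2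
          + 2*a*b*(A.mulVec z j * A.mulVec z' j))]
    rw [Finset.sum_add_distrib, Finset.sum_add_distrib, ← Finset.mul_sum, ← Finset.mul_sum,
      ← Finset.mul_sum]
  have hAq : ∑ j, A.mulVec q j ^ 2
      = b^2 * (∑ j, A.mulVec z j ^2) + a^2 * (∑ j, A.mulVec z' j ^2)
        + (-2)*a*b*(∑ j, A.mulVec z j * A.mulVec z' j) := by
    rw [Finset.sum_congr rfl (fun j _ => by
      rw [mulVec_comb A b (-a) z z' j]; ring_nf :
        ∀ j ∈ univ, A.mulVec q j ^2 = b^2 * A.mulVec z j ^2 + a^2 * A.mulVec z' j ^2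
          + (-2)*a*b*(A.mulVec z j * A.mulVec z' j))]
    rw [Finset.sum_add_distrib, Finset.sum_add_distrib, ← Finset.mul_sum, ← Finset.mul_sum,
      ← Finset.mul_sum]
  obtain ⟨hplo, hphi⟩ := hRIP.2.2 p hsptp
  obtain ⟨hqlo, hqhi⟩ := hRIP.2.2 q hsptq
  rw [hsump] at hplo hphi
  rw [hsumq] at hqlo hqhi
  rw [hAp] at hplo hphi
  rw [hAq] at hqlo hqhi
  rw [abs_le]
  constructor
  · nlinarith [mul_pos ha0 hb0]
  · nlinarith [mul_pos ha0 hb0]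

lemma exists_top (u : Fin k → ℝ) :
    ∀ (s : ℕ) (F : Finset (Fin k)), s ≤ F.card →
      ∃ T₁, T₁ ⊆ F ∧ T₁.card = s ∧ ∀ i ∈ T₁, ∀ j ∈ F \ T₁, |u j| ≤ |u i| := by
  intro s
  induction s with
  | zero => intro F _; exact ⟨∅, empty_subset F, card_empty, by simp⟩
  | succ t ih =>
      intro F hF
      have hne : F.Nonempty := Finset.card_pos.mp (by omega)
      obtain ⟨i₀, hi₀F, hi₀max⟩ := Finset.exists_max_image F (fun i => |u i|) hne
      have hcard : t ≤ (F.erase i₀).card := by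
        rw [Finset.card_erase_of_mem hi₀F]; omega
      obtain ⟨T', hT'sub, hT'card, hT'max⟩ := ih (F.erase i₀) hcard
      refine ⟨insert i₀ T', ?_, ?_, ?_⟩
      · intro i hi
        rcases Finset.mem_insert.mp hi with h | h
        · rw [h]; exact hi₀F
        · exact Finset.mem_of_mem_erase (hT'sub h)
      · rw [Finset.card_insert_of_notMem (fun h => (Finset.notMem_erase i₀ F) (hT'sub h)),
          hT'card]
      · intro i hi j hj
        have hjF : j ∈ F := (Finset.mem_sdiff.mp hj).1
        have hjn : j ∉ insert i₀ T' := (Finset.mem_sdiff.mp hj).2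
        rcases Finset.mem_insert.mp hi with h | h
        · rw [h]; exact hi₀max j hjF
        · apply hT'max i h
          rw [Finset.mem_sdiff]
          exact ⟨Finset.mem_erase.mpr ⟨fun hc => hjn (by rw [hc]; exact Finset.mem_insert_self _ _), hjF⟩,
            fun hc => hjn (Finset.mem_insert_of_mem hc)⟩

lemma tail_decomp {s : ℕ} (hs : 0 < s) :
    ∀ (c : ℕ) (F : Finset (Fin k)), F.card ≤ c → ∀ (u : Fin k → ℝ) (b : ℝ), 0 ≤ b →
      (∀ i, i ∉ F → u i = 0) → (∀ i, |u i| ≤ b) →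
      ∃ (K : ℕ) (B : ℕ → Finset (Fin k)),
        (∀ j, j < K → B j ⊆ F ∧ (B j).card ≤ s) ∧
        (∀ j j', j < j' → j' < K → Disjoint (B j) (B j')) ∧
        (∀ i ∈ F, ∃ j, j < K ∧ i ∈ B j) ∧
        (∑ j ∈ Finset.range K, norm2 (restr (B j) u))
          ≤ Real.sqrt s * b + (∑ i ∈ F, |u i|) / Real.sqrt s := by
  intro c
  induction c with
  | zero =>
      intro F hF u b hb _ _
      have : F = ∅ := Finset.card_eq_zero.mp (Nat.le_zero.mp hF)
      refine ⟨0, fun _ => ∅, by omega, by omega, by simp [this], ?_⟩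
      simp only [Finset.range_zero, Finset.sum_empty]
      have h1 : (0:ℝ) ≤ ∑ i ∈ F, |u i| := Finset.sum_nonneg (fun i _ => abs_nonneg _)
      have h2 : (0:ℝ) < Real.sqrt s := Real.sqrt_pos.mpr (by exact_mod_cast hs)
      positivity
  | succ c ih =>
      intro F hF u b hb hsupp hbd
      by_cases hFs : F.card ≤ s
      · -- single block
        refine ⟨1, fun _ => F, by intro j _; exact ⟨Finset.Subset.refl F, hFs⟩, by omega,
          fun i hi => ⟨0, by omega, hi⟩, ?_⟩
        simp only [Finset.range_one, Finset.sum_singleton]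
        have hle : norm2 (restr F u) ≤ Real.sqrt s * b := by
          apply norm2_le (by positivity)
          rw [sum_sq_restr]
          calc ∑ i ∈ F, u i ^ 2 ≤ ∑ i ∈ F, b ^ 2 := by
                apply Finset.sum_le_sum
                intro i _
                have := hbd i
                nlinarith [abs_nonneg (u i), sq_abs (u i)]
            _ = F.card * b^2 := by rw [Finset.sum_const]; simp [mul_comm]
            _ ≤ s * b^2 := by
                apply mul_le_mul_of_nonneg_right _ (by positivity)
                exact_mod_cast hFs
            _ = (Real.sqrt s * b)^2 := by
                rw [mul_pow, Real.sq_sqrt (by positivity)]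
        have h1 : (0:ℝ) ≤ ∑ i ∈ F, |u i| := Finset.sum_nonneg (fun i _ => abs_nonneg _)
        have h2 : (0:ℝ) < Real.sqrt s := Real.sqrt_pos.mpr (by exact_mod_cast hs)
        have : (0:ℝ) ≤ (∑ i ∈ F, |u i|) / Real.sqrt s := by positivity
        linarith
      · push_neg at hFs
        obtain ⟨T₁, hT₁sub, hT₁card, hT₁max⟩ := exists_top u s F (le_of_lt hFs)
        have hT₁ne : T₁.Nonempty := Finset.card_pos.mp (by omega)
        obtain ⟨i₁, hi₁T, hi₁min⟩ := Finset.exists_min_image T₁ (fun i => |u i|) hT₁ne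
        set b' := |u i₁| with hb'
        have hb'0 : 0 ≤ b' := abs_nonneg _
        set F' := F \ T₁ with hF'
        set u' := restr F' u with hu'
        have hF'card : F'.card ≤ c := by
          have h1 : F'.card = F.card - T₁.card := Finset.card_sdiff_of_subset hT₁sub
          omega
        have hu'supp : ∀ i, i ∉ F' → u' i = 0 := by
          intro i hi; simp [hu', restr, hi]
        have hu'bd : ∀ i, |u' i| ≤ b' := by
          intro i
          by_cases hi : i ∈ F'
          · have : u' i = u i := by simp [hu', restr, hi]
            rw [this]
            exact hT₁max i₁ hi₁T i hi
          · simp [hu', restr, hi, hb'0]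
        obtain ⟨K, B, hB1, hB2, hB3, hB4⟩ := ih F' hF'card u' b' hb'0 hu'supp hu'bd
        refine ⟨K + 1, fun j => if j = 0 then T₁ else B (j - 1), ?_, ?_, ?_, ?_⟩
        · intro j hj
          by_cases h : j = 0
          · simp [h, hT₁sub, hT₁card.le]
          · simp only [h, if_neg h]
            obtain ⟨h1, h2⟩ := hB1 (j-1) (by omega)
            exact ⟨h1.trans (Finset.sdiff_subset), h2⟩
        · intro j j' hjj' hj'
          by_cases h : j = 0
          · simp only [h, if_pos rfl, if_neg (by omega : j' ≠ 0)]
            have := (hB1 (j'-1) (by omega)).1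
            exact Finset.disjoint_left.mpr (fun i hi hi' =>
              (Finset.mem_sdiff.mp (this hi')).2 hi)
          · simp only [if_neg h, if_neg (by omega : j' ≠ 0)]
            exact hB2 (j-1) (j'-1) (by omega) (by omega)
        · intro i hi
          by_cases h : i ∈ T₁
          · exact ⟨0, by omega, by simpa using h⟩
          · obtain ⟨j, hj, hij⟩ := hB3 i (Finset.mem_sdiff.mpr ⟨hi, h⟩)
            exact ⟨j + 1, by omega, by simpa using hij⟩
        · -- the norm bound
          have hsq : (0:ℝ) < Real.sqrt s := Real.sqrt_pos.mpr (by exact_mod_cast hs)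
          have hstep : ∀ j ∈ Finset.range K, restr (B j) u' = restr (B j) u := by
            intro j hj
            funext i
            simp only [restr, hu']
            by_cases hi : i ∈ B j
            · have hiF' : i ∈ F' := (hB1 j (Finset.mem_range.mp hj)).1 hi
              simp [hi, hiF']
            · simp [hi]
          have hsum : ∑ j ∈ Finset.range (K+1),
              norm2 (restr (if j = 0 then T₁ else B (j-1)) u)
              = norm2 (restr T₁ u) + ∑ j ∈ Finset.range K, norm2 (restr (B j) u') := by
            rw [Finset.sum_range_succ']
            have hrest : ∑ j ∈ Finset.range K,
                norm2 (restr (if j+1 = 0 then T₁ else B (j+1-1)) u)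
                = ∑ j ∈ Finset.range K, norm2 (restr (B j) u') := by
              apply Finset.sum_congr rfl
              intro j hj
              rw [if_neg (Nat.succ_ne_zero j), Nat.add_sub_cancel, hstep j hj]
            rw [hrest, if_pos rfl, add_comm]
          rw [hsum]
          -- norm2 (restr T₁ u) ≤ √s * b
          have hT1bd : norm2 (restr T₁ u) ≤ Real.sqrt s * b := by
            apply norm2_le (by positivity)
            rw [sum_sq_restr]
            calc ∑ i ∈ T₁, u i ^ 2 ≤ ∑ i ∈ T₁, b ^ 2 := by
                  apply Finset.sum_le_sum
                  intro i _
                  have := hbd i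
                  nlinarith [abs_nonneg (u i), sq_abs (u i)]
              _ = T₁.card * b^2 := by rw [Finset.sum_const]; simp [mul_comm]
              _ = s * b^2 := by rw [hT₁card]
              _ = (Real.sqrt s * b)^2 := by rw [mul_pow, Real.sq_sqrt (by positivity)]
          -- s * b' ≤ ∑_{T₁} |u|
          have hsb' : (s : ℝ) * b' ≤ ∑ i ∈ T₁, |u i| := by
            calc (s:ℝ) * b' = ∑ _i ∈ T₁, b' := by
                  rw [Finset.sum_const, hT₁card]; simp [mul_comm]
              _ ≤ ∑ i ∈ T₁, |u i| := Finset.sum_le_sum (fun i hi => hi₁min i hi)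
          have hsplit : ∑ i ∈ F, |u i| = (∑ i ∈ T₁, |u i|) + ∑ i ∈ F', |u i| := by
            rw [hF', ← Finset.sum_sdiff hT₁sub]; ring
          have hF'u' : ∑ i ∈ F', |u' i| = ∑ i ∈ F', |u i| := by
            apply Finset.sum_congr rfl
            intro i hi; simp [hu', restr, hi]
          calc norm2 (restr T₁ u) + ∑ j ∈ Finset.range K, norm2 (restr (B j) u')
              ≤ Real.sqrt s * b + (Real.sqrt s * b' + (∑ i ∈ F', |u' i|) / Real.sqrt s) := by
                linarith [hB4]
            _ ≤ Real.sqrt s * b + (∑ i ∈ F, |u i|) / Real.sqrt s := by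
                rw [hsplit, hF'u']
                have key : Real.sqrt s * b' ≤ (∑ i ∈ T₁, |u i|) / Real.sqrt s := by
                  rw [le_div_iff₀ hsq]
                  calc Real.sqrt s * b' * Real.sqrt s
                      = (Real.sqrt s * Real.sqrt s) * b' := by ring
                    _ = (s:ℝ) * b' := by rw [Real.mul_self_sqrt (by positivity)]
                    _ ≤ ∑ i ∈ T₁, |u i| := hsb'
                have : ((∑ i ∈ T₁, |u i|) + ∑ i ∈ F', |u i|) / Real.sqrt s
                    = (∑ i ∈ T₁, |u i|) / Real.sqrt s + (∑ i ∈ F', |u i|) / Real.sqrt s :=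
                  add_div _ _ _
                rw [this]
                linarith


set_option maxHeartbeats 1000000 in
lemma core {n m : ℕ} (A : Matrix (Fin n) (Fin m) ℝ) {δ : ℝ} (ε : ℝ) {S : ℕ} (s : ℕ)
    (T₀ T₁ : Finset (Fin m)) (h : Fin m → ℝ) (K : ℕ) (B : ℕ → Finset (Fin m))
    (hRIP : RIPBound A S δ)
    (hδ2 : (Real.sqrt 2 + 1) * δ < 1)
    (hε : 0 ≤ ε)
    (hd01 : Disjoint T₀ T₁)
    (hT₁s : T₁.card ≤ s)
    (hcards : T₀.card + s ≤ S)
    (h2s : s + s ≤ S)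
    (hBdis : ∀ j, j < K → Disjoint (B j) (T₀ ∪ T₁) ∧ (B j).card ≤ s)
    (hdecomp : ∀ i, h i = restr (T₀ ∪ T₁) h i + ∑ j ∈ Finset.range K, restr (B j) h i)
    (hAh : norm2 (A.mulVec h) ≤ 2 * ε)
    (hη : ∑ j ∈ Finset.range K, norm2 (restr (B j) h) ≤ norm2 (restr (T₀ ∪ T₁) h)) :
    norm2 h ≤ C1 δ * ε := by
  have hδ0 : 0 ≤ δ := hRIP.1
  have hsqrt2 : Real.sqrt 2 ^ 2 = 2 := Real.sq_sqrt (by norm_num)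
  have hsqrt2n : 0 ≤ Real.sqrt 2 := Real.sqrt_nonneg 2
  set d := 1 - (Real.sqrt 2 + 1) * δ with hd
  have hd0 : 0 < d := by linarith
  set g := restr (T₀ ∪ T₁) h with hg
  set a := norm2 g with haa
  have ha0 : 0 ≤ a := norm2_nonneg g
  set η := ∑ j ∈ Finset.range K, norm2 (restr (B j) h) with hηdef
  have hη0 : 0 ≤ η := Finset.sum_nonneg (fun j _ => norm2_nonneg _)
  have ha2 : ∑ i, g i ^ 2 = a ^ 2 := (sq_norm2 g).symm
  -- RIP on g
  have hgcard : (spt g).card ≤ S := by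
    refine le_trans (Finset.card_le_card (spt_restr_subset _ _)) ?_
    refine le_trans (Finset.card_union_le _ _) ?_
    omega
  obtain ⟨hglo, hghi⟩ := hRIP.2.2 g hgcard
  -- mulVec decomposition
  have hmv : ∀ jj, A.mulVec h jj
      = A.mulVec g jj + ∑ j ∈ Finset.range K, A.mulVec (restr (B j) h) jj := by
    intro jj
    simp only [Matrix.mulVec, dotProduct]
    calc ∑ i, A jj i * h i
        = ∑ i, (A jj i * g i + ∑ j ∈ Finset.range K, A jj i * restr (B j) h i) := by
          apply Finset.sum_congr rfl
          intro i _
          rw [hdecomp i, mul_add, Finset.mul_sum]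
      _ = (∑ i, A jj i * g i) + ∑ i, ∑ j ∈ Finset.range K, A jj i * restr (B j) h i :=
          Finset.sum_add_distrib
      _ = (∑ i, A jj i * g i)
          + ∑ j ∈ Finset.range K, ∑ i, A jj i * restr (B j) h i := by rw [Finset.sum_comm]
  -- key identity
  have hkey : ∑ jj, A.mulVec g jj * A.mulVec h jj
      = (∑ jj, A.mulVec g jj ^ 2)
        + ∑ j ∈ Finset.range K, ∑ jj, A.mulVec g jj * A.mulVec (restr (B j) h) jj := by
    calc ∑ jj, A.mulVec g jj * A.mulVec h jj
        = ∑ jj, (A.mulVec g jj ^ 2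
            + ∑ j ∈ Finset.range K, A.mulVec g jj * A.mulVec (restr (B j) h) jj) := by
          apply Finset.sum_congr rfl
          intro jj _
          rw [hmv jj, mul_add, Finset.mul_sum, ← pow_two]
      _ = _ := by rw [Finset.sum_add_distrib, Finset.sum_comm]
  -- bound on ⟨Ag, Ah⟩
  have hAg : norm2 (A.mulVec g) ≤ Real.sqrt (1 + δ) * a := by
    apply norm2_le (by positivity)
    calc ∑ jj, A.mulVec g jj ^ 2 ≤ (1 + δ) * ∑ i, g i ^ 2 := hghi
      _ = (1 + δ) * a ^ 2 := by rw [ha2]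
      _ = (Real.sqrt (1 + δ) * a) ^ 2 := by
          rw [mul_pow, Real.sq_sqrt (by linarith)]
  have hterm1 : ∑ jj, A.mulVec g jj * A.mulVec h jj ≤ Real.sqrt (1 + δ) * a * (2 * ε) := by
    refine le_trans (le_abs_self _) (le_trans (cauchy _ _) ?_)
    exact mul_le_mul hAg hAh (norm2_nonneg _) (by positivity)
  -- splitting g
  have hgsplit : g = fun i => 1 * restr T₀ h i + 1 * restr T₁ h i := by
    funext i
    simp only [hg, restr, one_mul]
    by_cases h0 : i ∈ T₀
    · have h1 : i ∉ T₁ := Finset.disjoint_left.mp hd01 h0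
      simp [h0, h1, Finset.mem_union]
    · by_cases h1 : i ∈ T₁
      · simp [h0, h1, Finset.mem_union]
      · simp [h0, h1, Finset.mem_union]
  set p := norm2 (restr T₀ h) with hpd
  set q := norm2 (restr T₁ h) with hqd
  have hp0 : 0 ≤ p := norm2_nonneg _
  have hq0 : 0 ≤ q := norm2_nonneg _
  have hpq : p ^ 2 + q ^ 2 = a ^ 2 := by
    rw [hpd, hqd, haa, sq_norm2, sq_norm2, sq_norm2, hg, sum_sq_restr, sum_sq_restr,
      sum_sq_restr, Finset.sum_union hd01]
  have hpqa : p + q ≤ Real.sqrt 2 * a := by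
    have e : (Real.sqrt 2 * a) ^ 2 = 2 * a ^ 2 := by rw [mul_pow, hsqrt2]
    have h1 : (p + q) ^ 2 ≤ (Real.sqrt 2 * a) ^ 2 := by nlinarith [sq_nonneg (p - q)]
    have h2 := Real.sqrt_le_sqrt h1
    rwa [Real.sqrt_sq (by positivity), Real.sqrt_sq (by positivity)] at h2
  -- cross term bounds
  have hcross : ∀ j, j < K →
      |∑ jj, A.mulVec g jj * A.mulVec (restr (B j) h) jj|
        ≤ δ * (p + q) * norm2 (restr (B j) h) := by
    intro j hj
    obtain ⟨hdisj, hcardBj⟩ := hBdis j hj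
    have hmv2 : ∀ jj, A.mulVec g jj
        = A.mulVec (restr T₀ h) jj + A.mulVec (restr T₁ h) jj := by
      intro jj; rw [hgsplit, mulVec_comb]; ring
    have hsplitsum : ∑ jj, A.mulVec g jj * A.mulVec (restr (B j) h) jj
        = (∑ jj, A.mulVec (restr T₀ h) jj * A.mulVec (restr (B j) h) jj)
          + ∑ jj, A.mulVec (restr T₁ h) jj * A.mulVec (restr (B j) h) jj := by
      rw [← Finset.sum_add_distrib]
      apply Finset.sum_congr rfl
      intro jj _
      rw [hmv2 jj]; ring
    have hd0j : Disjoint (spt (restr T₀ h)) (spt (restr (B j) h)) := by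
      apply Finset.disjoint_left.mpr
      intro i hi hi'
      have h1 : i ∈ T₀ := spt_restr_subset _ _ hi
      have h2 : i ∈ B j := spt_restr_subset _ _ hi'
      exact Finset.disjoint_left.mp hdisj h2 (Finset.mem_union_left _ h1)
    have hd1j : Disjoint (spt (restr T₁ h)) (spt (restr (B j) h)) := by
      apply Finset.disjoint_left.mpr
      intro i hi hi'
      have h1 : i ∈ T₁ := spt_restr_subset _ _ hi
      have h2 : i ∈ B j := spt_restr_subset _ _ hi'
      exact Finset.disjoint_left.mp hdisj h2 (Finset.mem_union_right _ h1)
    have hc0 : (spt (restr T₀ h)).card + (spt (restr (B j) h)).card ≤ S := by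
      have := Finset.card_le_card (spt_restr_subset T₀ h)
      have := Finset.card_le_card (spt_restr_subset (B j) h)
      omega
    have hc1 : (spt (restr T₁ h)).card + (spt (restr (B j) h)).card ≤ S := by
      have := Finset.card_le_card (spt_restr_subset T₁ h)
      have := Finset.card_le_card (spt_restr_subset (B j) h)
      omega
    have hro0 := ro_bound hRIP (restr T₀ h) (restr (B j) h) hd0j hc0
    have hro1 := ro_bound hRIP (restr T₁ h) (restr (B j) h) hd1j hc1
    rw [hsplitsum]
    refine le_trans (abs_add_le _ _) ?_
    rw [← hpd, ← hqd] at *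
    have hn0 : 0 ≤ norm2 (restr (B j) h) := norm2_nonneg _
    nlinarith [hro0, hro1]
  -- summing cross terms
  have hcrosssum : |∑ j ∈ Finset.range K, ∑ jj, A.mulVec g jj * A.mulVec (restr (B j) h) jj|
      ≤ δ * (p + q) * η := by
    refine le_trans (Finset.abs_sum_le_sum_abs _ _) ?_
    rw [hηdef, Finset.mul_sum]
    apply Finset.sum_le_sum
    intro j hj
    exact hcross j (Finset.mem_range.mp hj)
  -- main chain
  have hmain : (1 - δ) * a ^ 2 ≤ Real.sqrt (1 + δ) * a * (2 * ε) + δ * (p + q) * η := by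
    have h1 : (1 - δ) * a ^ 2 ≤ ∑ jj, A.mulVec g jj ^ 2 := by rw [← ha2]; exact hglo
    have h2 : ∑ jj, A.mulVec g jj ^ 2
        = (∑ jj, A.mulVec g jj * A.mulVec h jj)
          - ∑ j ∈ Finset.range K, ∑ jj, A.mulVec g jj * A.mulVec (restr (B j) h) jj := by
      rw [hkey]; ring
    have h3 := neg_abs_le (∑ j ∈ Finset.range K, ∑ jj,
      A.mulVec g jj * A.mulVec (restr (B j) h) jj)
    linarith [hcrosssum, hterm1]
  -- η ≤ a
  have hηa : η ≤ a := hη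
  -- d * a ≤ 2 √(1+δ) ε
  have hda : d * a ^ 2 ≤ 2 * Real.sqrt (1 + δ) * ε * a := by
    have h1 : (p + q) * η ≤ Real.sqrt 2 * a * a :=
      mul_le_mul hpqa hηa hη0 (by positivity)
    have hpqη : δ * ((p + q) * η) ≤ δ * (Real.sqrt 2 * a * a) :=
      mul_le_mul_of_nonneg_left h1 hδ0
    nlinarith [hmain, hpqη]
  have hfin : norm2 h ≤ 2 * a := by
    have hht : norm2 h ≤ a + η := by
      have hh : h = fun i => g i + ∑ j ∈ Finset.range K, restr (B j) h i := funext hdecomp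
      calc norm2 h = norm2 (fun i => g i + ∑ j ∈ Finset.range K, restr (B j) h i) := by
            rw [← hh]
        _ ≤ norm2 g + norm2 (fun i => ∑ j ∈ Finset.range K, restr (B j) h i) :=
            norm2_triangle _ _
        _ ≤ a + η := by
            have := norm2_sum_fn (Finset.range K) (fun j => restr (B j) h)
            rw [haa, hηdef]; exact add_le_add_right this a
    linarith
  -- conclude
  have hC1 : C1 δ * ε = 4 * Real.sqrt (1 + δ) * ε / d := by
    rw [C1, hd]; ring
  rw [hC1]
  rw [le_div_iff₀ hd0]
  by_cases ha : a = 0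
  · have : norm2 h ≤ 0 := by rw [ha] at hfin; linarith
    have h4 : 0 ≤ 4 * Real.sqrt (1 + δ) * ε := by positivity
    nlinarith [norm2_nonneg h]
  · have hapos : 0 < a := lt_of_le_of_ne ha0 (Ne.symm ha)
    have hda' : d * a ≤ 2 * Real.sqrt (1 + δ) * ε := by
      have h2 : d * a * a ≤ (2 * Real.sqrt (1 + δ) * ε) * a := by nlinarith [hda]
      exact le_of_mul_le_mul_right h2 hapos
    have h3 := mul_le_mul_of_nonneg_right hfin (le_of_lt hd0)
    nlinarith [hda', h3]

lemma sqrt2_le : Real.sqrt 2 ≤ 1.41422 := by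
  rw [show (1.41422:ℝ) = Real.sqrt (1.41422^2) from (Real.sqrt_sq (by norm_num)).symm]
  apply Real.sqrt_le_sqrt; norm_num

lemma C1_le {δ : ℝ} (h0 : 0 ≤ δ) (h : δ ≤ (Real.sqrt 2 - 1)/2) : C1 δ ≤ 8.79 := by
  have hsq2 : Real.sqrt 2 * Real.sqrt 2 = 2 := Real.mul_self_sqrt (by norm_num)
  have hs2n : 0 ≤ Real.sqrt 2 := Real.sqrt_nonneg 2
  have hdge : (1:ℝ)/2 ≤ 1 - (Real.sqrt 2 + 1) * δ := by
    have h1 : (Real.sqrt 2 + 1) * δ ≤ (Real.sqrt 2 + 1) * ((Real.sqrt 2 - 1)/2) :=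
      mul_le_mul_of_nonneg_left h (by positivity)
    nlinarith
  have hd0 : (0:ℝ) < 1 - (Real.sqrt 2 + 1) * δ := by linarith
  have hnum : Real.sqrt (1 + δ) ≤ 1.0987 := by
    rw [show (1.0987:ℝ) = Real.sqrt (1.0987^2) from (Real.sqrt_sq (by norm_num)).symm]
    apply Real.sqrt_le_sqrt
    nlinarith [sqrt2_le]
  rw [C1, div_le_iff₀ hd0]
  nlinarith [hnum, hdge, Real.sqrt_nonneg (1+δ)]



set_option maxHeartbeats 1000000 in
/-- modified-CS error bound with `δ < (√2-1)/2` (Corollary 1). -/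
theorem modCS_error_bound' {n m : ℕ} (A : Matrix (Fin n) (Fin m) ℝ)
    (x : Fin m → ℝ) (w : Fin n → ℝ) (ε δ : ℝ) (T : Finset (Fin m))
    (hw : norm2 w ≤ ε)
    (hδ : δ < (Real.sqrt 2 - 1) / 2)
    (hRIP : RIPBound A ((spt x).card + ((spt x) \ T).card + (T \ (spt x)).card) δ)
    (xhat : Fin m → ℝ)
    (hxhat : ModCS A (fun j => (A.mulVec x) j + w j) ε T xhat) :
    norm2 (fun i => x i - xhat i) ≤ C1 δ * ε ∧ C1 δ * ε ≤ 8.79 * ε := by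
  have hδ0 : 0 ≤ δ := hRIP.1
  have hε : 0 ≤ ε := le_trans (norm2_nonneg w) hw
  have hsq2 : Real.sqrt 2 * Real.sqrt 2 = 2 := Real.mul_self_sqrt (by norm_num)
  have hs2n : 0 ≤ Real.sqrt 2 := Real.sqrt_nonneg 2
  have hδ2 : (Real.sqrt 2 + 1) * δ < 1 := by
    have h1 : (Real.sqrt 2 + 1) * δ ≤ (Real.sqrt 2 + 1) * ((Real.sqrt 2 - 1)/2) :=
      mul_le_mul_of_nonneg_left (le_of_lt hδ) (by positivity)
    nlinarith
  -- second part of the conclusion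
  have hpart2 : C1 δ * ε ≤ 8.79 * ε :=
    mul_le_mul_of_nonneg_right (C1_le hδ0 (le_of_lt hδ)) hε
  refine ⟨?_, hpart2⟩
  -- setup
  set N := spt x with hN
  set Δ := N \ T with hΔ
  set s := Δ.card with hs
  set T₀ := T ∪ N with hT₀
  set F := T₀ᶜ with hF
  set h := fun i => xhat i - x i with hh
  set S := N.card + Δ.card + (T \ N).card with hS
  -- rewrite goal in terms of h
  have hgoal : norm2 (fun i => x i - xhat i) = norm2 h := by
    rw [show (fun i => x i - xhat i) = (fun i => -(h i)) from funext (fun i => by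
      simp only [hh]; ring)]
    exact norm2_neg h
  rw [hgoal]
  obtain ⟨hfeas, hmin⟩ := hxhat
  have hfeas' : norm2 (fun j => (A.mulVec x j + w j) - A.mulVec xhat j) ≤ ε := hfeas
  -- feasibility of x
  have hfx : norm2 (fun j => (A.mulVec x j + w j) - A.mulVec x j) ≤ ε := by
    rw [show (fun j => (A.mulVec x j + w j) - A.mulVec x j) = w from funext (fun j => by ring)]
    exact hw
  have hl1 : ∑ i ∈ Tᶜ, |xhat i| ≤ ∑ i ∈ Tᶜ, |x i| := hmin x hfx
  -- cardinal facts
  have hcardT₀ : T₀.card = N.card + (T \ N).card := by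
    rw [hT₀, ← Finset.card_sdiff_add_card]; omega
  have hsN : s ≤ N.card := by
    rw [hs, hΔ]; exact Finset.card_le_card (Finset.sdiff_subset)
  have hcards : T₀.card + s ≤ S := by omega
  have h2s : s + s ≤ S := by omega
  -- Tᶜ = Δ ∪ F, disjoint
  have hTc : Tᶜ = Δ ∪ F := by
    ext i
    simp only [Finset.mem_compl, hΔ, hF, hT₀, Finset.mem_union, Finset.mem_sdiff]
    by_cases h1 : i ∈ T <;> by_cases h2 : i ∈ N <;> tauto
  have hdisjΔF : Disjoint Δ F := by
    apply Finset.disjoint_left.mpr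
    intro i hi hi'
    rw [hF, Finset.mem_compl] at hi'
    exact hi' (Finset.mem_union_right _ ((Finset.mem_sdiff.mp hi).1))
  -- x vanishes on F
  have hxF : ∀ i ∈ F, x i = 0 := by
    intro i hi
    rw [hF, Finset.mem_compl] at hi
    by_contra hc
    exact hi (Finset.mem_union_right _ (by simp [hN, spt, hc]))
  -- the cone constraint
  have hcone : ∑ i ∈ F, |h i| ≤ ∑ i ∈ Δ, |h i| := by
    have e1 : ∑ i ∈ Tᶜ, |xhat i| = ∑ i ∈ Δ, |xhat i| + ∑ i ∈ F, |xhat i| := by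
      rw [hTc, Finset.sum_union hdisjΔF]
    have e2 : ∑ i ∈ Tᶜ, |x i| = ∑ i ∈ Δ, |x i| := by
      rw [hTc, Finset.sum_union hdisjΔF]
      rw [show ∑ i ∈ F, |x i| = 0 from Finset.sum_eq_zero (fun i hi => by rw [hxF i hi]; simp)]
      ring
    have e3 : ∑ i ∈ F, |xhat i| = ∑ i ∈ F, |h i| := by
      apply Finset.sum_congr rfl
      intro i hi
      rw [show h i = xhat i from by simp only [hh]; rw [hxF i hi]; ring]
    have e4 : ∀ i ∈ Δ, |x i| - |xhat i| ≤ |h i| := by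
      intro i _
      have := abs_sub_abs_le_abs_sub (x i) (xhat i)
      have habs : |x i - xhat i| = |h i| := by rw [hh]; exact abs_sub_comm _ _
      linarith
    have e5 : ∑ i ∈ Δ, (|x i| - |xhat i|) ≤ ∑ i ∈ Δ, |h i| := Finset.sum_le_sum e4
    rw [e1, e2] at hl1
    rw [Finset.sum_sub_distrib] at e5
    linarith
  -- bound on A h
  have hAh : norm2 (A.mulVec h) ≤ 2 * ε := by
    have hmvh : A.mulVec h = fun j =>
        -((A.mulVec x j + w j) - A.mulVec xhat j) + w j := by
      funext j
      have hhc : h = fun i => 1 * xhat i + (-1) * x i := funext (fun i => by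
        simp only [hh]; ring)
      rw [hhc, mulVec_comb]; ring
    rw [hmvh]
    have := norm2_triangle (fun j => -((A.mulVec x j + w j) - A.mulVec xhat j)) w
    have hneg : norm2 (fun j => -((A.mulVec x j + w j) - A.mulVec xhat j))
        = norm2 (fun j => (A.mulVec x j + w j) - A.mulVec xhat j) :=
      norm2_neg _
    calc norm2 (fun j => -((A.mulVec x j + w j) - A.mulVec xhat j) + w j)
        ≤ norm2 (fun j => -((A.mulVec x j + w j) - A.mulVec xhat j)) + norm2 w := this
      _ ≤ ε + ε := by rw [hneg]; exact add_le_add hfeas' hw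
      _ = 2 * ε := by ring
  -- disjointness T₀ / F
  have hd0F : Disjoint T₀ F := by rw [hF]; exact disjoint_compl_right
  -- Δ ⊆ T₀
  have hΔT₀ : Δ ⊆ T₀ := fun i hi =>
    Finset.mem_union_right _ ((Finset.mem_sdiff.mp hi).1)
  by_cases hFs : F.card ≤ s
  · -- case 1 : the complement is small; take T₁ = F, no tail
    apply core A ε s T₀ F h 0 (fun _ => ∅) hRIP hδ2 hε hd0F hFs hcards h2s
      (by intro j hj; omega)
      (by
        intro i
        rw [show T₀ ∪ F = Finset.univ from by rw [hF]; exact Finset.union_compl T₀]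
        simp [restr])
      hAh
      (by simp only [Finset.range_zero, Finset.sum_empty]; exact norm2_nonneg _)
  · push_neg at hFs
    by_cases hs0 : s = 0
    · -- case 2 : Δ = ∅, h is supported on T₀
      have hΔe : Δ = ∅ := Finset.card_eq_zero.mp hs0
      have hhF : ∀ i ∈ F, h i = 0 := by
        intro i hi
        have h1 : ∑ i ∈ F, |h i| ≤ 0 := by
          rw [hΔe] at hcone; simpa using hcone
        have h2 : ∑ i ∈ F, |h i| = 0 :=
          le_antisymm h1 (Finset.sum_nonneg (fun i _ => abs_nonneg _))
        have := (Finset.sum_eq_zero_iff_of_nonneg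
          (fun i _ => abs_nonneg (h i))).mp h2 i hi
        exact abs_eq_zero.mp this
      apply core A ε s T₀ ∅ h 0 (fun _ => ∅) hRIP hδ2 hε (Finset.disjoint_empty_right T₀)
        (by simp) hcards h2s
        (by intro j hj; omega)
        (by
          intro i
          simp only [Finset.range_zero, Finset.sum_empty, add_zero, Finset.union_empty]
          by_cases hi : i ∈ T₀
          · simp [restr, hi]
          · rw [restr, if_neg hi]
            exact hhF i (by rw [hF, Finset.mem_compl]; exact hi))
        hAh
        (by simp only [Finset.range_zero, Finset.sum_empty]; exact norm2_nonneg _)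
    · -- case 3 : main case
      have hs1 : 0 < s := Nat.pos_of_ne_zero hs0
      obtain ⟨T₁, hT₁sub, hT₁card, hT₁max⟩ := exists_top h s F (le_of_lt hFs)
      have hT₁ne : T₁.Nonempty := Finset.card_pos.mp (by omega)
      obtain ⟨i₁, hi₁T, hi₁min⟩ := Finset.exists_min_image T₁ (fun i => |h i|) hT₁ne
      set b := |h i₁| with hb
      have hb0 : 0 ≤ b := abs_nonneg _
      set F' := F \ T₁ with hF'
      set u := restr F' h with hu
      have husupp : ∀ i, i ∉ F' → u i = 0 := by
        intro i hi; simp [hu, restr, hi]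
      have hubd : ∀ i, |u i| ≤ b := by
        intro i
        by_cases hi : i ∈ F'
        · have : u i = h i := by simp [hu, restr, hi]
          rw [this]
          exact hT₁max i₁ hi₁T i hi
        · simp [hu, restr, hi, hb0]
      obtain ⟨K, B, hB1, hB2, hB3, hB4⟩ :=
        tail_decomp hs1 F'.card F' (le_refl _) u b hb0 husupp hubd
      have hrBu : ∀ j, j < K → restr (B j) u = restr (B j) h := by
        intro j hj
        funext i
        simp only [restr, hu]
        by_cases hi : i ∈ B j
        · have hiF' : i ∈ F' := (hB1 j hj).1 hi
          simp [hi, hiF']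
        · simp [hi]
      have hd01 : Disjoint T₀ T₁ := by
        apply Finset.disjoint_left.mpr
        intro i hi hi'
        have := hT₁sub hi'
        rw [hF, Finset.mem_compl] at this
        exact this hi
      apply core A ε s T₀ T₁ h K B hRIP hδ2 hε hd01 hT₁card.le hcards h2s
      · -- hBdis
        intro j hj
        refine ⟨?_, (hB1 j hj).2⟩
        apply Finset.disjoint_left.mpr
        intro i hi hi'
        have hiF' : i ∈ F' := (hB1 j hj).1 hi
        rw [hF', Finset.mem_sdiff, hF, Finset.mem_compl] at hiF'
        rcases Finset.mem_union.mp hi' with h1 | h1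
        · exact hiF'.1 h1
        · exact hiF'.2 h1
      · -- hdecomp
        intro i
        by_cases hi : i ∈ T₀ ∪ T₁
        · rw [restr, if_pos hi]
          have : ∑ j ∈ Finset.range K, restr (B j) h i = 0 := by
            apply Finset.sum_eq_zero
            intro j hj
            rw [restr, if_neg]
            intro hiB
            have hiF' : i ∈ F' := (hB1 j (Finset.mem_range.mp hj)).1 hiB
            rw [hF', Finset.mem_sdiff, hF, Finset.mem_compl] at hiF'
            rcases Finset.mem_union.mp hi with h1 | h1
            · exact hiF'.1 h1
            · exact hiF'.2 h1
          rw [this]; ring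
        · rw [restr, if_neg hi]
          have hiF' : i ∈ F' := by
            rw [hF', Finset.mem_sdiff, hF, Finset.mem_compl]
            constructor
            · intro hc; exact hi (Finset.mem_union_left _ hc)
            · intro hc; exact hi (Finset.mem_union_right _ hc)
          obtain ⟨j₀, hj₀, hij₀⟩ := hB3 i hiF'
          have : ∑ j ∈ Finset.range K, restr (B j) h i = restr (B j₀) h i := by
            apply Finset.sum_eq_single j₀
            · intro j hj hne
              rw [restr, if_neg]
              intro hiB
              rcases Nat.lt_or_ge j j₀ with hlt | hge
              · exact Finset.disjoint_left.mp (hB2 j j₀ hlt hj₀) hiB hij₀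
              · have hlt : j₀ < j := by omega
                exact Finset.disjoint_left.mp (hB2 j₀ j hlt (Finset.mem_range.mp hj)) hij₀ hiB
            · intro hc
              exact absurd (Finset.mem_range.mpr hj₀) hc
          rw [this, restr, if_pos hij₀]
          ring
      · -- hAh
        exact hAh
      · -- hη
        have hsqs : (0:ℝ) < Real.sqrt s := Real.sqrt_pos.mpr (by exact_mod_cast hs1)
        have e0 : ∑ j ∈ Finset.range K, norm2 (restr (B j) h)
            = ∑ j ∈ Finset.range K, norm2 (restr (B j) u) := by
          apply Finset.sum_congr rfl
          intro j hj
          rw [hrBu j (Finset.mem_range.mp hj)]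
        have hsb : (s:ℝ) * b ≤ ∑ i ∈ T₁, |h i| := by
          calc (s:ℝ) * b = ∑ _i ∈ T₁, b := by
                rw [Finset.sum_const, hT₁card]; simp [mul_comm]
            _ ≤ ∑ i ∈ T₁, |h i| := Finset.sum_le_sum (fun i hi => hi₁min i hi)
        have hsbb : Real.sqrt s * b ≤ (∑ i ∈ T₁, |h i|) / Real.sqrt s := by
          rw [le_div_iff₀ hsqs]
          calc Real.sqrt s * b * Real.sqrt s = (Real.sqrt s * Real.sqrt s) * b := by ring
            _ = (s:ℝ) * b := by rw [Real.mul_self_sqrt (by positivity)]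
            _ ≤ ∑ i ∈ T₁, |h i| := hsb
        have hF'sum : ∑ i ∈ F', |u i| = ∑ i ∈ F', |h i| := by
          apply Finset.sum_congr rfl
          intro i hi; simp [hu, restr, hi]
        have hFsplit : ∑ i ∈ F, |h i| = ∑ i ∈ T₁, |h i| + ∑ i ∈ F', |h i| := by
          rw [hF', ← Finset.sum_sdiff hT₁sub]; ring
        have hΔl2 : ∑ i ∈ Δ, |h i| ≤ Real.sqrt s * norm2 (restr Δ h) := by
          have := l1_le_sqrt_card_l2 Δ h
          rwa [← hs] at this
        have hmono : norm2 (restr Δ h) ≤ norm2 (restr (T₀ ∪ T₁) h) :=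
          norm2_restr_mono (fun i hi => Finset.mem_union_left _ (hΔT₀ hi)) h
        calc ∑ j ∈ Finset.range K, norm2 (restr (B j) h)
            = ∑ j ∈ Finset.range K, norm2 (restr (B j) u) := e0
          _ ≤ Real.sqrt s * b + (∑ i ∈ F', |u i|) / Real.sqrt s := hB4
          _ ≤ (∑ i ∈ T₁, |h i|) / Real.sqrt s + (∑ i ∈ F', |h i|) / Real.sqrt s := by
              rw [hF'sum] at *
              linarith [hsbb]
          _ = (∑ i ∈ F, |h i|) / Real.sqrt s := by rw [hFsplit, add_div]
          _ ≤ (∑ i ∈ Δ, |h i|) / Real.sqrt s := by gcongr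
          _ ≤ Real.sqrt s * norm2 (restr Δ h) / Real.sqrt s := by gcongr
          _ = norm2 (restr Δ h) := by
              rw [mul_comm, mul_div_assoc, div_self hsqs.ne', mul_one]
          _ ≤ norm2 (restr (T₀ ∪ T₁) h) := hmono
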